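/- Assume hypotheses (H1) and (H2) and the family setup below. Then the family of measures (η_ε(x)·e^{−2Q(x)}·1_{(ε,1/ε)}(x) dx)_{ε ∈ (0,1/2)} is tight on (0,∞): for every δ > 0 there exist 0 < m < M < ∞ such that for all ε ∈ (0,1/2), ∫_{(ε,1/ε) ∖ [m,M]} η_ε(x)·e^{−2Q(x)} dx ≤ δ. -/

import Mathlib

open MeasureTheory intervalIntegral Filter Topology

private lemma aux_amgm (t w u e : ℝ) (ht : 0 < t) (hw : 1 ≤ w) (hu : 0 ≤ u) (he : 0 < e) :
    u * e ≤ t / 2 * (u ^ 2 * w * e) + 1 / (2 * t) * (e / w) := by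
  have hw0 : 0 < w := lt_of_lt_of_le one_pos hw
  have key : u ≤ t / 2 * (u ^ 2 * w) + 1 / (2 * t * w) := by
    have h2 : u - t / 2 * (u ^ 2 * w) ≤ 1 / (2 * t * w) := by
      rw [le_div_iff₀ (by positivity)]
      nlinarith [sq_nonneg (t * w * u - 1)]
    linarith
  have h3 : u * e ≤ (t / 2 * (u ^ 2 * w) + 1 / (2 * t * w)) * e :=
    mul_le_mul_of_nonneg_right key he.le
  refine h3.trans_eq ?_
  field_simp

private lemma aux_amgm2 (t u e : ℝ) (ht : 0 < t) (hu : 0 ≤ u) (he : 0 < e) :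
    u * e ≤ t / 2 * (u ^ 2 * e) + 1 / (2 * t) * e := by
  have := aux_amgm t 1 u e ht le_rfl hu he
  simpa using this

private lemma aux_tail (f : ℝ → ℝ) (hf : IntegrableOn f (Set.Ioi 1))
    {c : ℝ} (hc : 0 < c) :
    ∃ M : ℝ, 2 ≤ M ∧ (∫ x in Set.Ioi M, f x) ≤ c := by
  set s : ℕ → Set ℝ := fun n => Set.Ioc 1 ((n : ℝ) + 2) with hs
  have hsm : ∀ n, MeasurableSet (s n) := fun n => measurableSet_Ioc
  have hmono : Monotone s := fun i j hij =>
    Set.Ioc_subset_Ioc le_rfl (by exact_mod_cast add_le_add_left (Nat.cast_le.mpr hij) 2)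
  have hU : (⋃ n, s n) = Set.Ioi 1 := by
    ext x
    simp only [hs, Set.mem_iUnion, Set.mem_Ioc, Set.mem_Ioi]
    constructor
    · rintro ⟨n, h1, _⟩; exact h1
    · intro h1
      obtain ⟨n, hn⟩ := exists_nat_ge x
      exact ⟨n, h1, by linarith⟩
  have ht := tendsto_setIntegral_of_monotone hsm hmono (hU ▸ hf)
  rw [hU] at ht
  have hsplit : ∀ n : ℕ, (∫ x in Set.Ioi ((n : ℝ) + 2), f x)
      = (∫ x in Set.Ioi (1 : ℝ), f x) - ∫ x in s n, f x := by
    intro n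
    have h12 : (1 : ℝ) ≤ (n : ℝ) + 2 := by
      have : (0 : ℝ) ≤ (n : ℝ) := Nat.cast_nonneg n
      linarith
    have hu : s n ∪ Set.Ioi ((n : ℝ) + 2) = Set.Ioi 1 := Set.Ioc_union_Ioi_eq_Ioi h12
    have hd : Disjoint (s n) (Set.Ioi ((n : ℝ) + 2)) := by
      rw [Set.disjoint_left]
      intro x hx hx'
      exact absurd hx.2 (not_le.mpr hx')
    have h1 : IntegrableOn f (s n) := hf.mono_set (by rw [← hu]; exact Set.subset_union_left)
    have h2 : IntegrableOn f (Set.Ioi ((n : ℝ) + 2)) :=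
      hf.mono_set (by rw [← hu]; exact Set.subset_union_right)
    have := setIntegral_union hd measurableSet_Ioi h1 h2
    rw [hu] at this
    linarith
  have hlim : Tendsto (fun n : ℕ => ∫ x in Set.Ioi ((n : ℝ) + 2), f x) atTop (𝓝 0) := by
    simp only [hsplit]
    have := tendsto_const_nhds (x := ∫ x in Set.Ioi (1 : ℝ), f x) (f := atTop (α := ℕ)) |>.sub ht
    simpa using this
  obtain ⟨n, hn⟩ := (hlim.eventually (Iio_mem_nhds hc)).exists
  refine ⟨(n : ℝ) + 2, by linarith [Nat.cast_nonneg (α := ℝ) n], le_of_lt hn⟩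

private lemma aux_head (f : ℝ → ℝ) (hf : IntegrableOn f (Set.Ioo 0 1))
    {c : ℝ} (hc : 0 < c) :
    ∃ m : ℝ, 0 < m ∧ m < 1 ∧ (∫ x in Set.Ioo 0 m, f x) ≤ c := by
  set s : ℕ → Set ℝ := fun n => Set.Ico (1 / ((n : ℝ) + 2)) 1 with hs
  have hpos : ∀ n : ℕ, (0 : ℝ) < 1 / ((n : ℝ) + 2) := by
    intro n
    have : (0 : ℝ) ≤ (n : ℝ) := Nat.cast_nonneg n
    positivity
  have hlt1 : ∀ n : ℕ, 1 / ((n : ℝ) + 2) < 1 := by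
    intro n
    rw [div_lt_one (by positivity)]
    have : (0 : ℝ) ≤ (n : ℝ) := Nat.cast_nonneg n
    linarith
  have hsm : ∀ n, MeasurableSet (s n) := fun n => measurableSet_Ico
  have hmono : Monotone s := by
    intro i j hij
    apply Set.Ico_subset_Ico _ le_rfl
    apply one_div_le_one_div_of_le (by positivity)
    have : (i : ℝ) ≤ (j : ℝ) := Nat.cast_le.mpr hij
    linarith
  have hU : (⋃ n, s n) = Set.Ioo 0 1 := by
    ext x
    simp only [hs, Set.mem_iUnion, Set.mem_Ico, Set.mem_Ioo]
    constructor
    · rintro ⟨n, h1, h2⟩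
      exact ⟨lt_of_lt_of_le (hpos n) h1, h2⟩
    · rintro ⟨h0, h1⟩
      obtain ⟨n, hn⟩ := exists_nat_ge (1 / x)
      refine ⟨n, ?_, h1⟩
      have h2 : 1 / x ≤ (n : ℝ) + 2 := by linarith
      calc 1 / ((n : ℝ) + 2) ≤ 1 / (1 / x) := by
            apply one_div_le_one_div_of_le (by positivity) h2
        _ = x := one_div_one_div x
  have ht := tendsto_setIntegral_of_monotone hsm hmono (hU ▸ hf)
  rw [hU] at ht
  have hsplit : ∀ n : ℕ, (∫ x in Set.Ioo 0 (1 / ((n : ℝ) + 2)), f x)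
      = (∫ x in Set.Ioo (0 : ℝ) 1, f x) - ∫ x in s n, f x := by
    intro n
    have hu : Set.Ioo 0 (1 / ((n : ℝ) + 2)) ∪ s n = Set.Ioo 0 1 :=
      Set.Ioo_union_Ico_eq_Ioo (hpos n) (hlt1 n).le
    have hd : Disjoint (Set.Ioo 0 (1 / ((n : ℝ) + 2))) (s n) := by
      rw [Set.disjoint_left]
      intro x hx hx'
      exact absurd hx.2 (not_lt.mpr hx'.1)
    have h1 : IntegrableOn f (Set.Ioo 0 (1 / ((n : ℝ) + 2))) :=
      hf.mono_set (by rw [← hu]; exact Set.subset_union_left)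
    have h2 : IntegrableOn f (s n) :=
      hf.mono_set (by rw [← hu]; exact Set.subset_union_right)
    have := setIntegral_union hd (hsm n) h1 h2
    rw [hu] at this
    linarith
  have hlim : Tendsto (fun n : ℕ => ∫ x in Set.Ioo 0 (1 / ((n : ℝ) + 2)), f x) atTop (𝓝 0) := by
    simp only [hsplit]
    have := tendsto_const_nhds (x := ∫ x in Set.Ioo (0 : ℝ) 1, f x) (f := atTop (α := ℕ)) |>.sub ht
    simpa using this
  obtain ⟨n, hn⟩ := (hlim.eventually (Iio_mem_nhds hc)).exists
  exact ⟨1 / ((n : ℝ) + 2), hpos n, hlt1 n, le_of_lt hn⟩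

theorem stmt_7 (q q' Q W : ℝ → ℝ)
    (hq : ∀ x ∈ Set.Ioi (0:ℝ), HasDerivAt q (q' x) x)
    (hq'cont : ContinuousOn q' (Set.Ioi 0))
    (hQ : ∀ x, Q x = ∫ y in (1:ℝ)..x, q y)
    (hWdef : ∀ x ∈ Set.Ioi (0:ℝ), W x = q x ^ 2 - q' x)
    -- Hypothesis (H1)
    (C : ℝ) (hC : 0 < C) (hWlb : ∀ x ∈ Set.Ioi (0:ℝ), -C ≤ W x)
    (hWtop : Tendsto W atTop atTop)
    -- Hypothesis (H2)
    (hH2a : IntegrableOn (fun x => Real.exp (-2 * Q x)) (Set.Ioi 1))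
    (hH2b : IntegrableOn (fun x => Real.exp (-2 * Q x) / (W x + C + 1)) (Set.Ioo 0 1))
    -- Family setup
    (Λ : ℝ) (lam : ℝ → ℝ) (η η' η'' : ℝ → ℝ → ℝ)
    (hlam : ∀ ε ∈ Set.Ioo (0:ℝ) (1/2), lam ε ≤ Λ)
    (hη' : ∀ ε ∈ Set.Ioo (0:ℝ) (1/2), ∀ x ∈ Set.Icc ε (1/ε),
      HasDerivAt (η ε) (η' ε x) x)
    (hη'' : ∀ ε ∈ Set.Ioo (0:ℝ) (1/2), ∀ x ∈ Set.Icc ε (1/ε),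
      HasDerivAt (η' ε) (η'' ε x) x)
    (hη''cont : ∀ ε ∈ Set.Ioo (0:ℝ) (1/2), ContinuousOn (η'' ε) (Set.Icc ε (1/ε)))
    (hpos : ∀ ε ∈ Set.Ioo (0:ℝ) (1/2), ∀ x ∈ Set.Ioo ε (1/ε), 0 < η ε x)
    (hbd : ∀ ε ∈ Set.Ioo (0:ℝ) (1/2), η ε ε = 0 ∧ η ε (1/ε) = 0)
    (hode : ∀ ε ∈ Set.Ioo (0:ℝ) (1/2), ∀ x ∈ Set.Icc ε (1/ε),
      (1/2) * η'' ε x - q x * η' ε x = -(lam ε) * η ε x)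
    (hnorm : ∀ ε ∈ Set.Ioo (0:ℝ) (1/2),
      (∫ x in ε..(1/ε), (η ε x) ^ 2 * Real.exp (-2 * Q x)) = 1) :
    ∀ δ > 0, ∃ m M : ℝ, 0 < m ∧ m < M ∧ ∀ ε ∈ Set.Ioo (0:ℝ) (1/2),
      (∫ x in Set.Ioo ε (1/ε) \ Set.Icc m M, η ε x * Real.exp (-2 * Q x)) ≤ δ := by
  intro δ hδ
  -- basic facts
  have hqc : ContinuousOn q (Set.Ioi 0) := fun x hx => ((hq x hx).continuousAt).continuousWithinAt
  have hQd : ∀ x ∈ Set.Ioi (0:ℝ), HasDerivAt Q (q x) x := by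
    intro x hx
    have hxpos : (0:ℝ) < x := hx
    have hint : IntervalIntegrable q volume 1 x := by
      apply ContinuousOn.intervalIntegrable
      apply hqc.mono
      intro y hy
      rcases Set.mem_uIcc.mp hy with h | h
      · exact lt_of_lt_of_le one_pos h.1
      · exact lt_of_lt_of_le hxpos h.1
    have hd := intervalIntegral.integral_hasDerivAt_right hint
      ((hqc.stronglyMeasurableAtFilter isOpen_Ioi) x hx)
      (hqc.continuousAt (isOpen_Ioi.mem_nhds hx))
    exact hd.congr_of_eventuallyEq (Filter.Eventually.of_forall fun y => hQ y)
  have hEd : ∀ x ∈ Set.Ioi (0:ℝ),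
      HasDerivAt (fun u => Real.exp (-2 * Q u)) (Real.exp (-2 * Q x) * (-2 * q x)) x :=
    fun x hx => ((hQd x hx).const_mul (-2)).exp
  have hEc : ContinuousOn (fun x => Real.exp (-2 * Q x)) (Set.Ioi 0) :=
    fun x hx => ((hEd x hx).continuousAt).continuousWithinAt
  have hWc : ContinuousOn W (Set.Ioi 0) :=
    ((hqc.pow 2).sub hq'cont).congr fun x hx => hWdef x hx
  have hwge : ∀ x ∈ Set.Ioi (0:ℝ), 1 ≤ W x + C + 1 := fun x hx => by linarith [hWlb x hx]
  -- the energy bound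
  have hEnergy : ∀ ε ∈ Set.Ioo (0:ℝ) (1/2),
      (∫ x in Set.Ioc ε (1/ε), η ε x ^ 2 * (W x + C + 1) * Real.exp (-2 * Q x))
        ≤ 2 * Λ + C + 1 := by
    intro ε hε
    have ha : 0 < ε := hε.1
    have hb : (2:ℝ) < 1/ε := by
      rw [lt_div_iff₀ ha]; linarith [hε.2]
    have hab : ε < 1/ε := by linarith [hε.2]
    have hKsub : Set.Icc ε (1/ε) ⊆ Set.Ioi 0 := fun x hx => lt_of_lt_of_le ha hx.1
    have huIcc : Set.uIcc ε (1/ε) = Set.Icc ε (1/ε) := Set.uIcc_of_le hab.le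
    have hηc : ContinuousOn (η ε) (Set.Icc ε (1/ε)) :=
      fun x hx => ((hη' ε hε x hx).continuousAt).continuousWithinAt
    have hη'c : ContinuousOn (η' ε) (Set.Icc ε (1/ε)) :=
      fun x hx => ((hη'' ε hε x hx).continuousAt).continuousWithinAt
    have hqK : ContinuousOn q (Set.Icc ε (1/ε)) := hqc.mono hKsub
    have hq'K : ContinuousOn q' (Set.Icc ε (1/ε)) := hq'cont.mono hKsub
    have hEK : ContinuousOn (fun x => Real.exp (-2 * Q x)) (Set.Icc ε (1/ε)) := hEc.mono hKsub
    -- FTC for G := (η η' - η η q) E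
    have hGd : ∀ x ∈ Set.uIcc ε (1/ε),
        HasDerivAt (fun y => (η ε y * η' ε y - η ε y * η ε y * q y) * Real.exp (-2 * Q y))
          ((η' ε x - η ε x * q x) ^ 2 * Real.exp (-2 * Q x)
            + η ε x ^ 2 * (q x ^ 2 - q' x - 2 * lam ε) * Real.exp (-2 * Q x)) x := by
      intro x hx
      rw [huIcc] at hx
      have hx0 : x ∈ Set.Ioi (0:ℝ) := hKsub hx
      have h1 := (((hη' ε hε x hx).mul (hη'' ε hε x hx)).sub
        (((hη' ε hε x hx).mul (hη' ε hε x hx)).mul (hq x hx0))).mul (hEd x hx0)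
      convert h1 using 1 <;> try rfl
      have hOde := hode ε hε x hx
      simp only [Pi.mul_apply, Pi.sub_apply]
      linear_combination (-2 * η ε x * Real.exp (-2 * Q x)) * hOde
    have hcont1 : ContinuousOn
        (fun x => (η' ε x - η ε x * q x) ^ 2 * Real.exp (-2 * Q x)) (Set.Icc ε (1/ε)) :=
      ((hη'c.sub (hηc.mul hqK)).pow 2).mul hEK
    have hcont2 : ContinuousOn
        (fun x => η ε x ^ 2 * (q x ^ 2 - q' x - 2 * lam ε) * Real.exp (-2 * Q x))
        (Set.Icc ε (1/ε)) :=
      ((hηc.pow 2).mul (((hqK.pow 2).sub hq'K).sub continuousOn_const)).mul hEK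
    have hcont3 : ContinuousOn (fun x => η ε x ^ 2 * Real.exp (-2 * Q x)) (Set.Icc ε (1/ε)) :=
      (hηc.pow 2).mul hEK
    have hint1 : IntervalIntegrable
        (fun x => (η' ε x - η ε x * q x) ^ 2 * Real.exp (-2 * Q x)) volume ε (1/ε) :=
      ContinuousOn.intervalIntegrable (by rw [huIcc]; exact hcont1)
    have hint2 : IntervalIntegrable
        (fun x => η ε x ^ 2 * (q x ^ 2 - q' x - 2 * lam ε) * Real.exp (-2 * Q x))
        volume ε (1/ε) :=
      ContinuousOn.intervalIntegrable (by rw [huIcc]; exact hcont2)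
    have hint3 : IntervalIntegrable (fun x => η ε x ^ 2 * Real.exp (-2 * Q x)) volume ε (1/ε) :=
      ContinuousOn.intervalIntegrable (by rw [huIcc]; exact hcont3)
    have hFTC := intervalIntegral.integral_eq_sub_of_hasDerivAt hGd (hint1.add hint2)
    rw [(hbd ε hε).1, (hbd ε hε).2] at hFTC
    simp only [zero_mul, mul_zero, zero_sub, sub_zero, zero_add, sub_self] at hFTC
    rw [intervalIntegral.integral_add hint1 hint2] at hFTC
    have hA : 0 ≤ ∫ x in ε..(1/ε), (η' ε x - η ε x * q x) ^ 2 * Real.exp (-2 * Q x) := by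
      apply intervalIntegral.integral_nonneg hab.le
      intro x hx
      positivity
    have hB : (∫ x in ε..(1/ε),
        η ε x ^ 2 * (q x ^ 2 - q' x - 2 * lam ε) * Real.exp (-2 * Q x)) ≤ 0 := by
      linarith
    rw [← intervalIntegral.integral_of_le hab.le]
    have hcongr : (∫ x in ε..(1/ε), η ε x ^ 2 * (W x + C + 1) * Real.exp (-2 * Q x))
        = ∫ x in ε..(1/ε),
          (η ε x ^ 2 * (q x ^ 2 - q' x - 2 * lam ε) * Real.exp (-2 * Q x)
            + (2 * lam ε + C + 1) * (η ε x ^ 2 * Real.exp (-2 * Q x))) := by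
      apply intervalIntegral.integral_congr
      intro x hx
      rw [huIcc] at hx
      simp only [hWdef x (hKsub hx)]
      ring
    rw [hcongr, intervalIntegral.integral_add hint2 (hint3.const_mul _),
      intervalIntegral.integral_const_mul, hnorm ε hε]
    have hl := hlam ε hε
    linarith
  -- choice of constants
  set B : ℝ := max (2 * Λ + C + 1) 1 with hBdef
  have hB1 : (1:ℝ) ≤ B := le_max_right _ _
  have hB0 : (0:ℝ) < B := lt_of_lt_of_le one_pos hB1
  set t : ℝ := δ / (2 * B) with htdef
  have ht : 0 < t := by positivity
  obtain ⟨M, hM2, hMc⟩ := aux_tail _ hH2a (c := δ ^ 2 / 4) (by positivity)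
  obtain ⟨m, hm0, hm1, hmc⟩ := aux_head _ hH2b (c := δ * t / 2) (by positivity)
  refine ⟨m, M, hm0, by linarith, ?_⟩
  intro ε hε
  have ha : 0 < ε := hε.1
  have hb : (2:ℝ) < 1/ε := by rw [lt_div_iff₀ ha]; linarith [hε.2]
  have hab : ε < 1/ε := by linarith [hε.2]
  have hKsub : Set.Icc ε (1/ε) ⊆ Set.Ioi 0 := fun x hx => lt_of_lt_of_le ha hx.1
  have hηc : ContinuousOn (η ε) (Set.Icc ε (1/ε)) :=
    fun x hx => ((hη' ε hε x hx).continuousAt).continuousWithinAt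
  have hEK : ContinuousOn (fun x => Real.exp (-2 * Q x)) (Set.Icc ε (1/ε)) := hEc.mono hKsub
  have hWK : ContinuousOn W (Set.Icc ε (1/ε)) := hWc.mono hKsub
  set S : Set ℝ := Set.Ioo ε (1/ε) \ Set.Icc m M with hSdef
  set S₁ : Set ℝ := S ∩ Set.Iio m with hS1def
  set S₂ : Set ℝ := S ∩ Set.Ioi M with hS2def
  have hSsub : S ⊆ Set.Ioo ε (1/ε) := Set.diff_subset
  have hSIcc : S ⊆ Set.Icc ε (1/ε) := hSsub.trans Set.Ioo_subset_Icc_self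
  have hS1meas : MeasurableSet S₁ := (measurableSet_Ioo.diff measurableSet_Icc).inter measurableSet_Iio
  have hS2meas : MeasurableSet S₂ := (measurableSet_Ioo.diff measurableSet_Icc).inter measurableSet_Ioi
  have hScup : S = S₁ ∪ S₂ := by
    ext x
    simp only [hS1def, hS2def, Set.mem_union, Set.mem_inter_iff, Set.mem_Iio, Set.mem_Ioi]
    constructor
    · intro hx
      rcases lt_or_ge x m with h | h
      · exact Or.inl ⟨hx, h⟩
      · refine Or.inr ⟨hx, ?_⟩
        by_contra hcon
        exact hx.2 ⟨h, le_of_not_gt hcon⟩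
    · rintro (⟨h, _⟩ | ⟨h, _⟩) <;> exact h
  have hdisj : Disjoint S₁ S₂ := by
    rw [Set.disjoint_left]
    rintro x ⟨_, hx1⟩ ⟨_, hx2⟩
    simp only [Set.mem_Iio] at hx1
    simp only [Set.mem_Ioi] at hx2
    linarith
  have hS1sub : S₁ ⊆ Set.Ioo 0 m := fun x hx => ⟨lt_trans ha (hSsub hx.1).1, hx.2⟩
  have hS2sub : S₂ ⊆ Set.Ioi M := fun x hx => hx.2
  have hS1K : S₁ ⊆ Set.Icc ε (1/ε) := fun x hx => hSIcc hx.1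
  have hS2K : S₂ ⊆ Set.Icc ε (1/ε) := fun x hx => hSIcc hx.1
  -- integrable functions
  have hηEint : IntegrableOn (fun x => η ε x * Real.exp (-2 * Q x)) (Set.Icc ε (1/ε)) :=
    (hηc.mul hEK).integrableOn_Icc
  have hη2wEint : IntegrableOn
      (fun x => η ε x ^ 2 * (W x + C + 1) * Real.exp (-2 * Q x)) (Set.Icc ε (1/ε)) :=
    (((hηc.pow 2).mul ((hWK.add continuousOn_const).add continuousOn_const)).mul hEK).integrableOn_Icc
  have hη2Eint : IntegrableOn (fun x => η ε x ^ 2 * Real.exp (-2 * Q x)) (Set.Icc ε (1/ε)) :=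
    ((hηc.pow 2).mul hEK).integrableOn_Icc
  have hgint : IntegrableOn (fun x => Real.exp (-2 * Q x) / (W x + C + 1)) (Set.Ioo 0 m) :=
    hH2b.mono_set (Set.Ioo_subset_Ioo le_rfl hm1.le)
  have hEMint : IntegrableOn (fun x => Real.exp (-2 * Q x)) (Set.Ioi M) :=
    hH2a.mono_set (Set.Ioi_subset_Ioi (by linarith))
  -- split the integral
  rw [hScup, setIntegral_union hdisj hS2meas (hηEint.mono_set hS1K) (hηEint.mono_set hS2K)]
  -- piece 1
  have hP1 : (∫ x in S₁, η ε x * Real.exp (-2 * Q x)) ≤ δ / 2 := by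
    have hmono1 : (∫ x in S₁, η ε x * Real.exp (-2 * Q x))
        ≤ ∫ x in S₁, (t / 2 * (η ε x ^ 2 * (W x + C + 1) * Real.exp (-2 * Q x))
            + 1 / (2 * t) * (Real.exp (-2 * Q x) / (W x + C + 1))) := by
      apply setIntegral_mono_on (hηEint.mono_set hS1K)
        (((hη2wEint.mono_set hS1K).const_mul _).add
          ((hgint.mono_set hS1sub).const_mul _)) hS1meas
      intro x hx
      have hx0 : x ∈ Set.Ioi (0:ℝ) := lt_of_lt_of_le ha (hS1K hx).1
      exact aux_amgm t (W x + C + 1) (η ε x) (Real.exp (-2 * Q x)) ht (hwge x hx0)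
        (hpos ε hε x (hSsub hx.1)).le (Real.exp_pos _)
    rw [integral_add ((hη2wEint.mono_set hS1K).const_mul _)
      ((hgint.mono_set hS1sub).const_mul _), MeasureTheory.integral_const_mul, MeasureTheory.integral_const_mul] at hmono1
    have hq1 : (∫ x in S₁, η ε x ^ 2 * (W x + C + 1) * Real.exp (-2 * Q x)) ≤ B := by
      calc (∫ x in S₁, η ε x ^ 2 * (W x + C + 1) * Real.exp (-2 * Q x))
          ≤ ∫ x in Set.Ioc ε (1/ε), η ε x ^ 2 * (W x + C + 1) * Real.exp (-2 * Q x) := by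
            apply setIntegral_mono_set (hη2wEint.mono_set Set.Ioc_subset_Icc_self)
            · refine (ae_restrict_iff' measurableSet_Ioc).mpr (ae_of_all _ ?_)
              intro x hx
              have hx0 : x ∈ Set.Ioi (0:ℝ) := lt_of_lt_of_le ha hx.1.le
              have h1 := hwge x hx0
              show (0:ℝ) ≤ η ε x ^ 2 * (W x + C + 1) * Real.exp (-2 * Q x)
              exact mul_nonneg (mul_nonneg (sq_nonneg _) (by linarith)) (Real.exp_pos _).le
            · exact HasSubset.Subset.eventuallyLE
                (fun x hx => ⟨(hSsub hx.1).1, (hSsub hx.1).2.le⟩)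
        _ ≤ 2 * Λ + C + 1 := hEnergy ε hε
        _ ≤ B := le_max_left _ _
    have hq2 : (∫ x in S₁, Real.exp (-2 * Q x) / (W x + C + 1)) ≤ δ * t / 2 := by
      calc (∫ x in S₁, Real.exp (-2 * Q x) / (W x + C + 1))
          ≤ ∫ x in Set.Ioo 0 m, Real.exp (-2 * Q x) / (W x + C + 1) := by
            apply setIntegral_mono_set hgint
            · refine (ae_restrict_iff' measurableSet_Ioo).mpr (ae_of_all _ ?_)
              intro x hx
              have h1 := hwge x hx.1
              positivity
            · exact HasSubset.Subset.eventuallyLE hS1sub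
        _ ≤ δ * t / 2 := hmc
    have he1 : t / 2 * B = δ / 4 := by
      rw [htdef]; field_simp; ring
    have he2 : 1 / (2 * t) * (δ * t / 2) = δ / 4 := by
      field_simp; ring
    have hc1 : t / 2 * (∫ x in S₁, η ε x ^ 2 * (W x + C + 1) * Real.exp (-2 * Q x))
        ≤ t / 2 * B := by
      apply mul_le_mul_of_nonneg_left hq1 (by positivity)
    have hc2 : 1 / (2 * t) * (∫ x in S₁, Real.exp (-2 * Q x) / (W x + C + 1))
        ≤ 1 / (2 * t) * (δ * t / 2) := by
      apply mul_le_mul_of_nonneg_left hq2 (by positivity)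
    linarith
  -- piece 2
  have hP2 : (∫ x in S₂, η ε x * Real.exp (-2 * Q x)) ≤ δ / 2 := by
    have hmono2 : (∫ x in S₂, η ε x * Real.exp (-2 * Q x))
        ≤ ∫ x in S₂, ((δ/2) / 2 * (η ε x ^ 2 * Real.exp (-2 * Q x))
            + 1 / (2 * (δ/2)) * Real.exp (-2 * Q x)) := by
      apply setIntegral_mono_on (hηEint.mono_set hS2K)
        (((hη2Eint.mono_set hS2K).const_mul _).add
          ((hEMint.mono_set hS2sub).const_mul _)) hS2meas
      intro x hx
      exact aux_amgm2 (δ/2) (η ε x) (Real.exp (-2 * Q x)) (by positivity)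
        (hpos ε hε x (hSsub hx.1)).le (Real.exp_pos _)
    rw [integral_add ((hη2Eint.mono_set hS2K).const_mul _)
      ((hEMint.mono_set hS2sub).const_mul _), MeasureTheory.integral_const_mul, MeasureTheory.integral_const_mul] at hmono2
    have hq1 : (∫ x in S₂, η ε x ^ 2 * Real.exp (-2 * Q x)) ≤ 1 := by
      calc (∫ x in S₂, η ε x ^ 2 * Real.exp (-2 * Q x))
          ≤ ∫ x in Set.Ioc ε (1/ε), η ε x ^ 2 * Real.exp (-2 * Q x) := by
            apply setIntegral_mono_set (hη2Eint.mono_set Set.Ioc_subset_Icc_self)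
            · refine (ae_restrict_iff' measurableSet_Ioc).mpr (ae_of_all _ ?_)
              intro x _
              positivity
            · exact HasSubset.Subset.eventuallyLE
                (fun x hx => ⟨(hSsub hx.1).1, (hSsub hx.1).2.le⟩)
        _ = 1 := by rw [← intervalIntegral.integral_of_le hab.le]; exact hnorm ε hε
    have hq2 : (∫ x in S₂, Real.exp (-2 * Q x)) ≤ δ ^ 2 / 4 := by
      calc (∫ x in S₂, Real.exp (-2 * Q x))
          ≤ ∫ x in Set.Ioi M, Real.exp (-2 * Q x) := by
            apply setIntegral_mono_set hEMint
            · exact ae_of_all _ fun x => (Real.exp_pos _).le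
            · exact HasSubset.Subset.eventuallyLE hS2sub
        _ ≤ δ ^ 2 / 4 := hMc
    have he2 : 1 / (2 * (δ/2)) * (δ ^ 2 / 4) = δ / 4 := by
      field_simp
    have hc1 : (δ/2) / 2 * (∫ x in S₂, η ε x ^ 2 * Real.exp (-2 * Q x)) ≤ (δ/2) / 2 * 1 :=
      mul_le_mul_of_nonneg_left hq1 (by positivity)
    have hc2 : 1 / (2 * (δ/2)) * (∫ x in S₂, Real.exp (-2 * Q x))
        ≤ 1 / (2 * (δ/2)) * (δ ^ 2 / 4) :=
      mul_le_mul_of_nonneg_left hq2 (by positivity)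
    linarith
  linarith
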